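/- arXiv:1203.2017 — 2 statements merged into one kernel-verified Lean document; each statement's English description precedes it below -/
import Mathlib

section
/- Let (Ω, 𝓕, P*) be a probability space, 𝓖 ⊆ 𝓕 a sub-σ-algebra, and d ∈ ℕ with d ≥ 1. Let ε : Ω → ℝ^d be a standard Gaussian vector independent of 𝓖 under P*. Let α : Ω → ℝ and v : Ω → ℝ^d be 𝓖-measurable with v bounded, and let p₀, q₀, b : Ω → ℝ be strictly positive 𝓖-measurable random variables (representing the previous-period bond prices P(t−Δ,t), P(t−Δ,t+m) and the bank account B_{t−Δ}). Define the new bank account B := b / p₀ and the new bond price Q := (q₀ / p₀) · exp(−α − ⟨v, ε⟩). If the no-arbitrage (martingale) condition E*[B^{-1} Q | 𝓖] = b^{-1} q₀ holds almost surely, then almost surely α = log E*[exp(−⟨v, ε⟩) | 𝓖] = ‖v‖²/2. -/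
open MeasureTheory ProbabilityTheory Real
open scoped ENNReal NNReal

lemma gauss_pdf_mul (t : ℝ) (x : ℝ) :
    gaussianPDFReal 0 1 x * Real.exp (t * x) = Real.exp (t^2/2) * gaussianPDFReal t 1 x := by
  simp only [gaussianPDFReal, NNReal.coe_one]
  rw [mul_assoc, ← Real.exp_add,
    show -(x - 0)^2/(2*(1:ℝ)) + t*x = t^2/2 + -(x - t)^2/(2*1) by ring, Real.exp_add]
  ring

lemma gauss_smul_eq (t : ℝ) : (fun x => (gaussianPDFReal 0 1 x).toNNReal • Real.exp (t * x))
      = fun x => Real.exp (t^2/2) * gaussianPDFReal t 1 x := by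
  funext x
  rw [NNReal.smul_def, Real.coe_toNNReal _ (gaussianPDFReal_nonneg 0 1 x), smul_eq_mul, gauss_pdf_mul]

lemma gauss_integrable_exp (t : ℝ) :
    Integrable (fun x => Real.exp (t * x)) (gaussianReal 0 1) := by
  rw [gaussianReal_of_var_ne_zero 0 one_ne_zero]
  have hmeas : Measurable fun x => (gaussianPDFReal 0 1 x).toNNReal :=
    (measurable_gaussianPDFReal 0 1).real_toNNReal
  rw [show gaussianPDF 0 1 = (fun x => ((gaussianPDFReal 0 1 x).toNNReal : ℝ≥0∞)) from rfl,
    integrable_withDensity_iff_integrable_smul hmeas, gauss_smul_eq]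
  exact (integrable_gaussianPDFReal t 1).const_mul _

lemma gauss_integral_exp (t : ℝ) :
    ∫ x, Real.exp (t * x) ∂(gaussianReal 0 1) = Real.exp (t^2/2) := by
  rw [gaussianReal_of_var_ne_zero 0 one_ne_zero]
  have hmeas : Measurable fun x => (gaussianPDFReal 0 1 x).toNNReal :=
    (measurable_gaussianPDFReal 0 1).real_toNNReal
  rw [show gaussianPDF 0 1 = (fun x => ((gaussianPDFReal 0 1 x).toNNReal : ℝ≥0∞)) from rfl,
    integral_withDensity_eq_integral_smul hmeas, gauss_smul_eq, integral_const_mul,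
    integral_gaussianPDFReal_eq_one t one_ne_zero, mul_one]

lemma gauss_integrable_exp_abs (t : ℝ) :
    Integrable (fun x => Real.exp (t * |x|)) (gaussianReal 0 1) := by
  refine ((gauss_integrable_exp t).add (gauss_integrable_exp (-t))).mono'
    (Real.measurable_exp.comp (measurable_const.mul measurable_abs)).aestronglyMeasurable
    (ae_of_all _ fun x => ?_)
  rw [Real.norm_eq_abs, Real.abs_exp]
  simp only [Pi.add_apply, neg_mul]
  rcases abs_cases x with ⟨h, _⟩ | ⟨h, _⟩ <;> rw [h]
  · exact le_add_of_nonneg_right (Real.exp_pos _).le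
  · rw [mul_neg, ← neg_mul]
    exact le_add_of_nonneg_left (Real.exp_pos _).le

lemma gaussPi_integral {d : ℕ} (w : Fin d → ℝ) :
    ∫ x : Fin d → ℝ, Real.exp (-∑ i, w i * x i) ∂(Measure.pi fun _ => gaussianReal 0 1)
      = Real.exp ((∑ i, (w i)^2) / 2) := by
  letI : MeasureSpace ℝ := ⟨gaussianReal 0 1⟩
  haveI : SigmaFinite (volume : Measure ℝ) := inferInstanceAs (SigmaFinite (gaussianReal 0 1))
  have hvol : Measure.pi (fun _ : Fin d => gaussianReal 0 1) = (volume : Measure (Fin d → ℝ)) :=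
    rfl
  rw [hvol]
  have heq : (fun x : Fin d → ℝ => Real.exp (-∑ i, w i * x i))
      = fun x => ∏ i, Real.exp (-w i * x i) := by
    funext x
    rw [← Real.exp_sum]
    congr 1
    simp [neg_mul, Finset.sum_neg_distrib]
  rw [heq, show (volume : Measure (Fin d → ℝ)) = Measure.pi (fun _ => (volume : Measure ℝ)) from rfl,
    MeasureTheory.integral_fintype_prod_eq_prod (μ := fun _ => (volume : Measure ℝ)) (f := fun (i : Fin d) (x : ℝ) =>
    Real.exp (-w i * x))]
  have : ∀ i : Fin d, ∫ x : ℝ, Real.exp (-w i * x) = Real.exp ((w i)^2/2) := by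
    intro i
    rw [show (volume : Measure ℝ) = gaussianReal 0 1 from rfl, gauss_integral_exp, neg_pow]
    norm_num
  simp_rw [this, ← Real.exp_sum, ← Finset.sum_div]

lemma gaussPi_integrable_exp_abs {d : ℕ} (C : ℝ) :
    Integrable (fun x : Fin d → ℝ => Real.exp (C * ∑ i, |x i|))
      (Measure.pi fun _ => gaussianReal 0 1) := by
  letI : MeasureSpace ℝ := ⟨gaussianReal 0 1⟩
  haveI : SigmaFinite (volume : Measure ℝ) := inferInstanceAs (SigmaFinite (gaussianReal 0 1))
  have heq : (fun x : Fin d → ℝ => Real.exp (C * ∑ i, |x i|))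
      = fun x => ∏ i, Real.exp (C * |x i|) := by
    funext x
    rw [← Real.exp_sum, Finset.mul_sum]
  rw [show Measure.pi (fun _ : Fin d => gaussianReal 0 1) = (volume : Measure (Fin d → ℝ))
    from rfl, heq]
  exact Integrable.fintype_prod (f := fun (_ : Fin d) (x : ℝ) => Real.exp (C * |x|))
    (fun i => gauss_integrable_exp_abs C)

lemma neg_sum_mul_le {d : ℕ} {a : Fin d → ℝ} (b : Fin d → ℝ) {C : ℝ}
    (h : ∀ i, |a i| ≤ C) : -(∑ i, a i * b i) ≤ C * ∑ i, |b i| := by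
  calc -(∑ i, a i * b i) = ∑ i, -(a i * b i) := by rw [← Finset.sum_neg_distrib]
    _ ≤ ∑ i, |a i| * |b i| := Finset.sum_le_sum fun i _ => (neg_le_abs _).trans (abs_mul _ _).le
    _ ≤ ∑ i, C * |b i| :=
        Finset.sum_le_sum fun i _ => mul_le_mul_of_nonneg_right (h i) (abs_nonneg _)
    _ = C * ∑ i, |b i| := (Finset.mul_sum _ _ _).symm

lemma condexp_exp_neg_inner
    {Ω : Type*} (𝓖 : MeasurableSpace Ω) {mΩ : MeasurableSpace Ω}
    (P : Measure Ω) [IsProbabilityMeasure P]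
    (h𝓖 : 𝓖 ≤ mΩ) {d : ℕ}
    (ε : Ω → (Fin d → ℝ)) (hε_meas : Measurable[mΩ] ε)
    (hε_law : @Measure.map Ω (Fin d → ℝ) mΩ _ ε P
      = Measure.pi (fun _ : Fin d => gaussianReal 0 1))
    (hε_indep : Indep (MeasurableSpace.comap ε inferInstance) 𝓖 P)
    (v : Ω → (Fin d → ℝ)) (hv_meas : Measurable[𝓖] v)
    (Cv : ℝ) (hCv : 0 ≤ Cv) (hv_bd : ∀ ω i, |v ω i| ≤ Cv) :
    (P[fun ω => Real.exp (-(∑ i, v ω i * ε ω i)) | 𝓖])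
      =ᵐ[P] fun ω => Real.exp ((∑ i, (v ω i)^2) / 2) := by
  set γ : Measure (Fin d → ℝ) := Measure.pi (fun _ : Fin d => gaussianReal 0 1) with hγ
  set g : Ω → ℝ := fun ω => Real.exp (-(∑ i, v ω i * ε ω i)) with hgdef
  set F : Ω → ℝ := fun ω => Real.exp ((∑ i, (v ω i)^2) / 2) with hFdef
  have hv : Measurable[mΩ] v := hv_meas.mono h𝓖 le_rfl
  have hg_meas : Measurable[mΩ] g := by
    apply Real.measurable_exp.comp
    exact (Finset.measurable_sum _ fun i _ =>
      ((measurable_pi_apply i).comp hv).mul ((measurable_pi_apply i).comp hε_meas)).neg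
  have hF𝓖 : Measurable[𝓖] F := by
    apply Real.measurable_exp.comp
    exact (Finset.measurable_sum _ fun i _ =>
      ((measurable_pi_apply i).comp hv_meas).pow_const 2).div_const 2
  -- integrability of g
  have hdom : Integrable (fun ω => Real.exp (Cv * ∑ i, |ε ω i|)) P := by
    have h1 : Integrable (fun x : Fin d → ℝ => Real.exp (Cv * ∑ i, |x i|)) γ :=
      gaussPi_integrable_exp_abs Cv
    rw [← hε_law] at h1
    exact (integrable_map_measure
      (by exact (Real.measurable_exp.comp ((Finset.measurable_sum _ fun i _ =>
        (measurable_pi_apply i).abs).const_mul Cv)).aestronglyMeasurable)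
      hε_meas.aemeasurable).mp h1
  have hg_bd : ∀ ω, ‖g ω‖ ≤ Real.exp (Cv * ∑ i, |ε ω i|) := by
    intro ω
    rw [Real.norm_eq_abs, hgdef, Real.abs_exp, Real.exp_le_exp]
    exact neg_sum_mul_le (ε ω) (hv_bd ω)
  have hg_int : Integrable g P :=
    hdom.mono' hg_meas.aestronglyMeasurable (ae_of_all _ hg_bd)
  -- boundedness of F
  have hF_bd : ∀ ω, ‖F ω‖ ≤ Real.exp ((d * Cv^2) / 2) := by
    intro ω
    rw [Real.norm_eq_abs, hFdef, Real.abs_exp, Real.exp_le_exp]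
    have hsum : ∑ i, (v ω i)^2 ≤ (d : ℝ) * Cv^2 := by
      calc ∑ i, (v ω i)^2 ≤ ∑ _i : Fin d, Cv^2 := Finset.sum_le_sum fun i _ => by
            rw [← sq_abs]; exact pow_le_pow_left₀ (abs_nonneg _) (hv_bd ω i) 2
        _ = d * Cv^2 := by simp [Finset.sum_const, nsmul_eq_mul]
    linarith
  have hF_int : Integrable F P :=
    (integrable_const (Real.exp ((d * Cv^2) / 2))).mono'
      ((hF𝓖.mono h𝓖 le_rfl).aestronglyMeasurable) (ae_of_all _ hF_bd)
  -- main set-integral identity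
  refine (ae_eq_condExp_of_forall_setIntegral_eq h𝓖 hg_int
    (fun s _ _ => hF_int.integrableOn) (fun s hs _ => ?_)
    ((hF𝓖.stronglyMeasurable).aestronglyMeasurable)).symm
  have hsΩ : MeasurableSet[mΩ] s := h𝓖 s hs
  set W : Ω → ℝ × (Fin d → ℝ) := fun ω => (s.indicator (fun _ => (1:ℝ)) ω, v ω) with hWdef
  have hW𝓖 : Measurable[𝓖] W := (measurable_const.indicator hs).prodMk hv_meas
  have hW : Measurable[mΩ] W := hW𝓖.mono h𝓖 le_rfl
  have hIndep : IndepFun W ε P := by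
    rw [IndepFun_iff_Indep]
    exact indep_of_indep_of_le_left hε_indep.symm (measurable_iff_comap_le.mp hW𝓖)
  have hmap : P.map (fun ω => (W ω, ε ω)) = (P.map W).prod (P.map ε) :=
    (indepFun_iff_map_prod_eq_prod_map_map hW.aemeasurable hε_meas.aemeasurable).mp hIndep
  haveI : IsProbabilityMeasure (P.map W) := Measure.isProbabilityMeasure_map hW.aemeasurable
  haveI : IsProbabilityMeasure γ := by
    rw [hγ]; infer_instance
  set Φ : (ℝ × (Fin d → ℝ)) × (Fin d → ℝ) → ℝ :=
    fun q => q.1.1 * Real.exp (-(∑ i, q.1.2 i * q.2 i)) with hΦdef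
  have hΦ : Measurable Φ := by
    apply (measurable_fst.comp measurable_fst).mul
    apply Real.measurable_exp.comp
    exact (Finset.measurable_sum _ fun i _ =>
      ((measurable_pi_apply i).comp (measurable_snd.comp measurable_fst)).mul
      ((measurable_pi_apply i).comp measurable_snd)).neg
  -- integrability of Φ on the product
  have hHprod : Integrable (fun q : (ℝ × (Fin d → ℝ)) × (Fin d → ℝ) =>
      Real.exp (Cv * ∑ i, |q.2 i|)) ((P.map W).prod γ) := by
    have hsnd : Measure.map Prod.snd ((P.map W).prod γ) = γ := by
      rw [Measure.map_snd_prod]; simp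
    have h1 : Integrable (fun x : Fin d → ℝ => Real.exp (Cv * ∑ i, |x i|)) γ :=
      gaussPi_integrable_exp_abs Cv
    rw [← hsnd] at h1
    exact (integrable_map_measure
      (by exact (Real.measurable_exp.comp ((Finset.measurable_sum _ fun i _ =>
        (measurable_pi_apply i).abs).const_mul Cv)).aestronglyMeasurable)
      measurable_snd.aemeasurable).mp h1
  set A : Set (ℝ × (Fin d → ℝ)) := {p | |p.1| ≤ 1 ∧ ∀ i, |p.2 i| ≤ Cv} with hAdef
  have hA : MeasurableSet A := by
    have heqA : A = {p : ℝ × (Fin d → ℝ) | |p.1| ≤ 1} ∩ ⋂ i, {p | |p.2 i| ≤ Cv} := by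
      ext p; simp [hAdef, Set.mem_iInter]
    rw [heqA]
    exact (measurableSet_le measurable_fst.abs measurable_const).inter
      (MeasurableSet.iInter fun i =>
        measurableSet_le (measurable_snd.eval.abs) measurable_const)
  have hWA : ∀ ω, W ω ∈ A := by
    intro ω
    constructor
    · by_cases hω : ω ∈ s <;> simp [hWdef, Set.indicator_of_mem, Set.indicator_of_notMem, hω]
    · exact fun i => hv_bd ω i
  have hae : ∀ᵐ q ∂((P.map W).prod γ), q.1 ∈ A := by
    rw [ae_iff]
    have h1 : {q : (ℝ × (Fin d → ℝ)) × (Fin d → ℝ) | ¬ q.1 ∈ A} = Aᶜ ×ˢ Set.univ := by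
      ext ⟨a, b⟩; simp
    rw [h1, Measure.prod_prod]
    have h2 : (P.map W) Aᶜ = 0 := by
      rw [Measure.map_apply hW hA.compl]
      have : W ⁻¹' Aᶜ = ∅ := by
        ext ω; simp [hWA ω]
      rw [this, measure_empty]
    rw [h2, zero_mul]
  have hΦint : Integrable Φ ((P.map W).prod γ) := by
    refine hHprod.mono' hΦ.aestronglyMeasurable ?_
    filter_upwards [hae] with q hq
    rw [Real.norm_eq_abs, hΦdef]
    calc |q.1.1 * Real.exp (-(∑ i, q.1.2 i * q.2 i))|
        = |q.1.1| * Real.exp (-(∑ i, q.1.2 i * q.2 i)) := by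
          rw [abs_mul, Real.abs_exp]
      _ ≤ 1 * Real.exp (Cv * ∑ i, |q.2 i|) :=
          mul_le_mul hq.1 (Real.exp_le_exp.mpr (neg_sum_mul_le _ hq.2))
            (Real.exp_pos _).le zero_le_one
      _ = Real.exp (Cv * ∑ i, |q.2 i|) := one_mul _
  -- the computation
  have hind : ∀ ω, Set.indicator s g ω = Φ (W ω, ε ω) := by
    intro ω
    by_cases hω : ω ∈ s <;>
      simp [hΦdef, hWdef, Set.indicator_of_mem, Set.indicator_of_notMem, hω, hgdef]
  calc ∫ x in s, F x ∂P = ∫ ω, Set.indicator s F ω ∂P := (integral_indicator hsΩ).symm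
    _ = ∫ p, p.1 * Real.exp ((∑ i, (p.2 i)^2) / 2) ∂(P.map W) := by
        rw [integral_map hW.aemeasurable]
        · congr 1
          funext ω
          by_cases hω : ω ∈ s <;>
            simp [hWdef, Set.indicator_of_mem, Set.indicator_of_notMem, hω, hFdef]
        · apply Measurable.aestronglyMeasurable
          exact measurable_fst.mul (Real.measurable_exp.comp
            ((Finset.measurable_sum _ fun i _ =>
              ((measurable_pi_apply i).comp measurable_snd).pow_const 2).div_const 2))
    _ = ∫ p, (∫ x, Φ (p, x) ∂γ) ∂(P.map W) := by
        apply integral_congr_ae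
        apply ae_of_all
        intro p
        rw [hΦdef]
        simp only
        rw [integral_const_mul, gaussPi_integral]
    _ = ∫ q, Φ q ∂((P.map W).prod γ) := (integral_prod _ hΦint).symm
    _ = ∫ q, Φ q ∂(P.map (fun ω => (W ω, ε ω))) := by rw [hmap, hε_law]
    _ = ∫ ω, Φ (W ω, ε ω) ∂P :=
        integral_map (hW.prodMk hε_meas).aemeasurable hΦ.aestronglyMeasurable
    _ = ∫ ω, Set.indicator s g ω ∂P := by
        apply integral_congr_ae; exact ae_of_all _ fun ω => (hind ω).symm
    _ = ∫ x in s, g x ∂P := integral_indicator hsΩ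

lemma exp_neg_inner_integrable
    {Ω : Type*} {mΩ : MeasurableSpace Ω} (P : Measure Ω) [IsProbabilityMeasure P] {d : ℕ}
    (ε : Ω → (Fin d → ℝ)) (hε_meas : Measurable[mΩ] ε)
    (hε_law : Measure.map ε P = Measure.pi (fun _ : Fin d => gaussianReal 0 1))
    (v : Ω → (Fin d → ℝ)) (hv : Measurable[mΩ] v)
    (Cv : ℝ) (hv_bd : ∀ ω i, |v ω i| ≤ Cv) :
    Integrable (fun ω => Real.exp (-(∑ i, v ω i * ε ω i))) P := by
  have hg_meas : Measurable[mΩ] fun ω => Real.exp (-(∑ i, v ω i * ε ω i)) := by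
    apply Real.measurable_exp.comp
    exact (Finset.measurable_sum _ fun i _ =>
      ((measurable_pi_apply i).comp hv).mul ((measurable_pi_apply i).comp hε_meas)).neg
  have hdom : Integrable (fun ω => Real.exp (Cv * ∑ i, |ε ω i|)) P := by
    have h1 : Integrable (fun x : Fin d → ℝ => Real.exp (Cv * ∑ i, |x i|))
        (Measure.pi (fun _ : Fin d => gaussianReal 0 1)) := gaussPi_integrable_exp_abs Cv
    rw [← hε_law] at h1
    exact (integrable_map_measure
      (by exact (Real.measurable_exp.comp ((Finset.measurable_sum _ fun i _ =>
        (measurable_pi_apply i).abs).const_mul Cv)).aestronglyMeasurable)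
      hε_meas.aemeasurable).mp h1
  refine hdom.mono' hg_meas.aestronglyMeasurable (ae_of_all _ fun ω => ?_)
  rw [Real.norm_eq_abs, Real.abs_exp, Real.exp_le_exp]
  exact neg_sum_mul_le (ε ω) (hv_bd ω)

/-- Discrete-time HJM drift condition: if the one-period bond update
`Q = (q₀/p₀)·exp(−α − ⟨v, ε⟩)` with bank account `B = b/p₀` satisfies the
no-arbitrage martingale condition `E*[B⁻¹ Q | 𝓖] = b⁻¹ q₀` a.s., then a.s.
`α = log E*[exp(−⟨v, ε⟩) | 𝓖] = ‖v‖²/2`. -/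
theorem consistent_yield_hjm_no_arbitrage_drift
    {Ω : Type*} {mΩ : MeasurableSpace Ω} (P : Measure Ω) [IsProbabilityMeasure P]
    (𝓖 : MeasurableSpace Ω) (h𝓖 : 𝓖 ≤ mΩ)
    (d : ℕ) (hd : 1 ≤ d)
    (ε : Ω → (Fin d → ℝ)) (hε_meas : Measurable[mΩ] ε)
    (hε_law : @Measure.map Ω (Fin d → ℝ) mΩ _ ε P
      = Measure.pi (fun _ : Fin d => gaussianReal 0 1))
    (hε_indep : Indep (MeasurableSpace.comap ε inferInstance) 𝓖 P)
    (α : Ω → ℝ) (hα_meas : Measurable[𝓖] α)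
    (v : Ω → (Fin d → ℝ)) (hv_meas : Measurable[𝓖] v)
    (Cv : ℝ) (hv_bd : ∀ ω i, |v ω i| ≤ Cv)
    (p₀ q₀ b : Ω → ℝ)
    (hp₀_meas : Measurable[𝓖] p₀) (hq₀_meas : Measurable[𝓖] q₀) (hb_meas : Measurable[𝓖] b)
    (hp₀_pos : ∀ ω, 0 < p₀ ω) (hq₀_pos : ∀ ω, 0 < q₀ ω) (hb_pos : ∀ ω, 0 < b ω)
    (B Q : Ω → ℝ)
    (hB : ∀ ω, B ω = b ω / p₀ ω)
    (hQ : ∀ ω, Q ω = (q₀ ω / p₀ ω) * Real.exp (-(α ω) - ∑ i, v ω i * ε ω i))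
    (h_na : (P[fun ω => (B ω)⁻¹ * Q ω | 𝓖]) =ᵐ[P] fun ω => (b ω)⁻¹ * q₀ ω) :
    ∀ᵐ ω ∂P,
      α ω = Real.log ((P[fun ω' => Real.exp (-(∑ i, v ω' i * ε ω' i)) | 𝓖]) ω)
      ∧ α ω = (∑ i, (v ω i) ^ 2) / 2 := by
  letI : MeasurableSpace Ω := mΩ
  have hCv : 0 ≤ Cv := by
    have hne : Nonempty Ω := by
      by_contra h
      rw [not_nonempty_iff] at h
      have h1 := measure_univ (μ := P)
      rw [Set.eq_empty_of_isEmpty Set.univ, measure_empty] at h1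
      exact zero_ne_one h1
    obtain ⟨ω⟩ := hne
    exact (abs_nonneg _).trans (hv_bd ω ⟨0, hd⟩)
  have hcond := condexp_exp_neg_inner 𝓖 P h𝓖 ε hε_meas hε_law hε_indep v hv_meas Cv hCv hv_bd
  have hg_int : Integrable (fun ω => Real.exp (-(∑ i, v ω i * ε ω i))) P :=
    exp_neg_inner_integrable P ε hε_meas hε_law v (hv_meas.mono h𝓖 le_rfl) Cv hv_bd
  have hBQ : (fun ω => (B ω)⁻¹ * Q ω)
      = (fun ω => q₀ ω / b ω * Real.exp (-(α ω)))
        * (fun ω => Real.exp (-(∑ i, v ω i * ε ω i))) := by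
    funext ω
    have hp := (hp₀_pos ω).ne'
    have hb' := (hb_pos ω).ne'
    simp only [Pi.mul_apply]
    rw [hB, hQ, sub_eq_add_neg, Real.exp_add]
    field_simp
  rw [hBQ] at h_na
  by_cases hint : Integrable ((fun ω => q₀ ω / b ω * Real.exp (-(α ω)))
      * (fun ω => Real.exp (-(∑ i, v ω i * ε ω i)))) P
  case neg =>
    rw [condExp_of_not_integrable hint] at h_na
    exfalso
    obtain ⟨ω, hω⟩ := h_na.exists
    exact absurd hω.symm (ne_of_gt (mul_pos (inv_pos.mpr (hb_pos ω)) (hq₀_pos ω)))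
  case pos =>
    have hG𝓖 : Measurable[𝓖] fun ω => q₀ ω / b ω * Real.exp (-(α ω)) :=
      (hq₀_meas.div hb_meas).mul (Real.measurable_exp.comp hα_meas.neg)
    have hpull := condExp_mul_of_stronglyMeasurable_left
      (f := fun ω => q₀ ω / b ω * Real.exp (-(α ω)))
      (Measurable.stronglyMeasurable hG𝓖) hint hg_int
    have h1 : (fun ω => q₀ ω / b ω * Real.exp (-(α ω)))
        * (P[fun ω => Real.exp (-(∑ i, v ω i * ε ω i)) | 𝓖])
        =ᵐ[P] fun ω => (b ω)⁻¹ * q₀ ω := hpull.symm.trans h_na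
    filter_upwards [h1, hcond] with ω h1ω h2ω
    simp only [Pi.mul_apply] at h1ω
    have hcan : Real.exp (-(α ω) + (∑ i, (v ω i)^2) / 2) = 1 := by
      have hne : q₀ ω / b ω ≠ 0 := div_ne_zero (hq₀_pos ω).ne' (hb_pos ω).ne'
      apply mul_left_cancel₀ hne
      rw [Real.exp_add, mul_one]
      calc q₀ ω / b ω * (Real.exp (-(α ω)) * Real.exp ((∑ i, (v ω i)^2) / 2))
          = q₀ ω / b ω * Real.exp (-(α ω))
            * (P[fun ω' => Real.exp (-(∑ i, v ω' i * ε ω' i)) | 𝓖]) ω := by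
            rw [h2ω]; ring
        _ = (b ω)⁻¹ * q₀ ω := h1ω
        _ = q₀ ω / b ω := by rw [inv_mul_eq_div]
    have hkey : α ω = (∑ i, (v ω i)^2) / 2 := by
      have h0 := congrArg Real.log hcan
      rw [Real.log_exp, Real.log_one] at h0
      linarith
    refine ⟨?_, hkey⟩
    rw [h2ω, Real.log_exp, hkey]
end

section
/- Let (Ω, 𝓕, P) be a probability space, 𝓖 ⊆ 𝓕 a sub-σ-algebra, and d ∈ ℕ with d ≥ 1. Let ε : Ω → ℝ^d be a standard Gaussian vector independent of 𝓖 under P, and let λ : Ω → ℝ^d be 𝓖-measurable and bounded. Define ξ := exp(−½‖λ‖² + ⟨λ, ε⟩) and the measure Q := ξ · P (i.e., Q has density ξ with respect to P). Then Q is a probability measure, and for every bounded measurable g : ℝ^d → ℝ one has, Q-almost surely, E_Q[g(ε − λ) | 𝓖] = ∫_{ℝ^d} g dγ_d, where γ_d is the d-fold product of the standard normal distribution. In particular, the distribution of ε − λ under Q, conditionally on 𝓖, is standard Gaussian. -/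
open MeasureTheory ProbabilityTheory Real
open scoped ENNReal NNReal

theorem lintegral_pi_prod_aux {X : Type*} [MeasurableSpace X] :
    ∀ (n : ℕ) (μ : Fin n → Measure X), (∀ i, SigmaFinite (μ i)) →
    ∀ (f : Fin n → X → ℝ≥0∞), (∀ i, Measurable (f i)) →
    ∫⁻ x, ∏ i, f i (x i) ∂Measure.pi μ = ∏ i, ∫⁻ t, f i t ∂μ i := by
  intro n
  induction n with
  | zero => intro μ _ f hf; simp
  | succ n ih =>
    intro μ hσ f hf
    haveI := hσ
    have hF : Measurable fun x : Fin (n+1) → X => ∏ i, f i (x i) :=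
      Finset.measurable_prod _ fun i _ => (hf i).comp (measurable_pi_apply i)
    have hmp := (measurePreserving_piFinSuccAbove (fun i : Fin (n+1) => μ i) 0).symm
    rw [← hmp.lintegral_comp hF]
    simp_rw [MeasurableEquiv.piFinSuccAbove_symm_apply, Fin.insertNthEquiv,
      Equiv.coe_fn_mk, Fin.insertNth_zero, Fin.prod_univ_succ, Fin.cons_zero, Fin.cons_succ,
      Fin.zero_succAbove, cast_eq]
    rw [lintegral_prod_mul (f := f 0) (g := fun y : Fin n → X => ∏ i, f i.succ (y i))
      (hf 0).aemeasurable
      (Finset.measurable_prod _ fun (i : Fin n) _ =>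
        (hf i.succ).comp (measurable_pi_apply i)).aemeasurable]
    rw [ih _ (fun i => inferInstance) _ (fun i => hf i.succ)]

theorem gaussian_tilt_one (a : ℝ) :
    (gaussianReal 0 1).withDensity (fun t => ENNReal.ofReal (rexp (a * t - a ^ 2 / 2)))
      = gaussianReal a 1 := by
  rw [gaussianReal_of_var_ne_zero 0 one_ne_zero, gaussianReal_of_var_ne_zero a one_ne_zero,
    ← withDensity_mul _ (measurable_gaussianPDF 0 1)
      (by fun_prop : Measurable fun t : ℝ => ENNReal.ofReal (rexp (a * t - a ^ 2 / 2)))]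
  congr 1
  funext x
  simp only [Pi.mul_apply, gaussianPDF]
  rw [← ENNReal.ofReal_mul (gaussianPDFReal_nonneg 0 1 x)]
  congr 1
  unfold gaussianPDFReal
  rw [mul_assoc, ← Real.exp_add, NNReal.coe_one]
  congr 1
  rw [Real.exp_eq_exp]
  ring

theorem pi_tilt (d : ℕ) (l : Fin d → ℝ) :
    (Measure.pi fun _ : Fin d => gaussianReal 0 1).withDensity
      (fun x => ENNReal.ofReal (rexp (-(∑ i, l i ^ 2) / 2 + ∑ i, l i * x i)))
    = Measure.pi (fun i => gaussianReal (l i) 1) := by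
  have hdens : ∀ x : Fin d → ℝ,
      ENNReal.ofReal (rexp (-(∑ i, l i ^ 2) / 2 + ∑ i, l i * x i))
        = ∏ i, ENNReal.ofReal (rexp (l i * x i - l i ^ 2 / 2)) := by
    intro x
    rw [← ENNReal.ofReal_prod_of_nonneg (fun i _ => (Real.exp_pos _).le), ← Real.exp_sum]
    congr 1
    rw [Finset.sum_sub_distrib, ← Finset.sum_div]
    ring
  refine (Measure.pi_eq fun s hs => ?_).symm
  rw [withDensity_apply _ (MeasurableSet.univ_pi hs), ← lintegral_indicator (MeasurableSet.univ_pi hs)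
    (fun x => ENNReal.ofReal (rexp (-(∑ i, l i ^ 2) / 2 + ∑ i, l i * x i)))]
  have hind : ∀ x : Fin d → ℝ,
      (Set.univ.pi s).indicator
        (fun x => ENNReal.ofReal (rexp (-(∑ i, l i ^ 2) / 2 + ∑ i, l i * x i))) x
      = ∏ i, (s i).indicator (fun t => ENNReal.ofReal (rexp (l i * t - l i ^ 2 / 2))) (x i) := by
    intro x
    by_cases hx : x ∈ Set.univ.pi s
    · rw [Set.indicator_of_mem hx, hdens]
      exact Finset.prod_congr rfl fun i _ =>
        (Set.indicator_of_mem (hx i trivial)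
          (fun t => ENNReal.ofReal (rexp (l i * t - l i ^ 2 / 2)))).symm
    · rw [Set.indicator_of_notMem hx]
      have : ∃ i, x i ∉ s i := by simpa [Set.mem_pi] using hx
      obtain ⟨i, hi⟩ := this
      exact (Finset.prod_eq_zero (Finset.mem_univ i)
        (Set.indicator_of_notMem hi _)).symm
  simp_rw [hind]
  rw [lintegral_pi_prod_aux d (fun _ => gaussianReal 0 1) (fun i => inferInstance)
    (fun i => (s i).indicator fun t => ENNReal.ofReal (rexp (l i * t - l i ^ 2 / 2)))
    (fun i => Measurable.indicator (by fun_prop) (hs i))]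
  refine Finset.prod_congr rfl fun i _ => ?_
  rw [lintegral_indicator (hs i) _, ← withDensity_apply _ (hs i), gaussian_tilt_one]

theorem pi_map_tilt (d : ℕ) (l : Fin d → ℝ) :
    (Measure.pi fun _ : Fin d => gaussianReal 0 1).map (fun x => x + l)
      = Measure.pi (fun i => gaussianReal (l i) 1) := by
  refine (Measure.pi_eq fun s hs => ?_).symm
  rw [Measure.map_apply (measurable_add_const l) (MeasurableSet.univ_pi hs)]
  have hpre : (fun x : Fin d → ℝ => x + l) ⁻¹' (Set.univ.pi s)
      = Set.univ.pi (fun i => (fun t => t + l i) ⁻¹' (s i)) := by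
    ext x; simp [Set.mem_pi]
  rw [hpre, Measure.pi_pi]
  refine Finset.prod_congr rfl fun i _ => ?_
  rw [← Measure.map_apply (measurable_add_const (l i)) (hs i),
    gaussianReal_map_add_const, zero_add]

theorem tilt_lintegral (d : ℕ) (l : Fin d → ℝ) (h : (Fin d → ℝ) → ℝ≥0∞) (hh : Measurable h) :
    ∫⁻ x, ENNReal.ofReal (rexp (-(∑ i, l i ^ 2) / 2 + ∑ i, l i * x i)) * h (x - l)
      ∂(Measure.pi fun _ : Fin d => gaussianReal 0 1)
    = ∫⁻ x, h x ∂(Measure.pi fun _ : Fin d => gaussianReal 0 1) := by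
  have hd : Measurable fun x : Fin d → ℝ =>
      ENNReal.ofReal (rexp (-(∑ i, l i ^ 2) / 2 + ∑ i, l i * x i)) := by fun_prop
  have hsub : Measurable fun x : Fin d → ℝ => x - l := measurable_id.sub_const l
  rw [show (fun x : Fin d → ℝ =>
      ENNReal.ofReal (rexp (-(∑ i, l i ^ 2) / 2 + ∑ i, l i * x i)) * h (x - l))
      = (fun x => ENNReal.ofReal (rexp (-(∑ i, l i ^ 2) / 2 + ∑ i, l i * x i)))
        * (fun x => h (x - l)) from rfl,
    ← lintegral_withDensity_eq_lintegral_mul (g := fun x => h (x - l)) _ hd (hh.comp hsub), pi_tilt,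
    ← pi_map_tilt, lintegral_map (f := fun x => h (x - l)) (hh.comp hsub) (measurable_add_const l)]
  simp

/-- Discrete one-period Girsanov: if `ε` is a standard Gaussian vector independent of `𝓖`
under `P` and `λ` is `𝓖`-measurable and bounded, then for the tilted measure
`Q = exp(−½‖λ‖² + ⟨λ, ε⟩) · P`, `Q` is a probability measure and, conditionally on `𝓖`,
the vector `ε − λ` is standard Gaussian under `Q`: for every bounded measurable `g`,
`E_Q[g(ε − λ) | 𝓖] = ∫ g dγ_d` holds `Q`-a.s. -/
theorem consistent_yield_girsanov_one_period
    {Ω : Type*} {mΩ : MeasurableSpace Ω} (P : Measure Ω) [IsProbabilityMeasure P]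
    (𝓖 : MeasurableSpace Ω) (h𝓖 : 𝓖 ≤ mΩ)
    (d : ℕ) (hd : 1 ≤ d)
    (ε : Ω → (Fin d → ℝ)) (hε_meas : Measurable[mΩ] ε)
    (hε_law : @Measure.map Ω (Fin d → ℝ) mΩ _ ε P
      = Measure.pi (fun _ : Fin d => gaussianReal 0 1))
    (hε_indep : Indep (MeasurableSpace.comap ε inferInstance) 𝓖 P)
    (lam : Ω → (Fin d → ℝ)) (hlam_meas : Measurable[𝓖] lam)
    (Clam : ℝ) (hlam_bd : ∀ ω i, |lam ω i| ≤ Clam)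
    (ξ : Ω → ℝ)
    (hξ : ∀ ω, ξ ω = Real.exp (-(∑ i, (lam ω i) ^ 2) / 2 + ∑ i, lam ω i * ε ω i))
    (Q : @Measure Ω mΩ)
    (hQ : Q = P.withDensity fun ω => ENNReal.ofReal (ξ ω)) :
    IsProbabilityMeasure Q
    ∧ ∀ g : (Fin d → ℝ) → ℝ, Measurable g → ∀ Cg : ℝ, (∀ x, |g x| ≤ Cg) →
      (Q[fun ω => g (ε ω - lam ω) | 𝓖])
        =ᵐ[Q] fun _ => ∫ x, g x ∂(Measure.pi fun _ : Fin d => gaussianReal 0 1) := by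
  letI : MeasurableSpace Ω := mΩ
  set μ₀ : Measure (Fin d → ℝ) := Measure.pi fun _ : Fin d => gaussianReal 0 1 with hμ₀
  have hlam' : Measurable[mΩ] lam := hlam_meas.mono h𝓖 le_rfl
  have hξ_eq : ξ = fun ω => rexp (-(∑ i, (lam ω i) ^ 2) / 2 + ∑ i, lam ω i * ε ω i) :=
    funext hξ
  have hξm : Measurable[mΩ] ξ := by
    rw [hξ_eq]
    exact Real.measurable_exp.comp (((Finset.measurable_sum Finset.univ fun i _ =>
      (((measurable_pi_apply i).comp hlam').pow_const 2)).neg.div_const 2).add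
      (Finset.measurable_sum Finset.univ fun i _ =>
        ((measurable_pi_apply i).comp hlam').mul ((measurable_pi_apply i).comp hε_meas)))
  have hεl : Measurable[mΩ] (fun ω => ε ω - lam ω) := hε_meas.sub hlam'
  -- the key identity
  have key : ∀ s : Set Ω, MeasurableSet[𝓖] s → ∀ h : (Fin d → ℝ) → ℝ≥0∞, Measurable h →
      ∫⁻ ω in s, ENNReal.ofReal (ξ ω) * h (ε ω - lam ω) ∂P = P s * ∫⁻ x, h x ∂μ₀ := by
    intro s hs h hh
    have hmS : MeasurableSet[mΩ] s := h𝓖 s hs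
    set X : Ω → (Fin d → ℝ) × ℝ := fun ω => (lam ω, s.indicator (fun _ => (1:ℝ)) ω) with hX_def
    have hX𝓖 : Measurable[𝓖] X :=
      Measurable.prodMk hlam_meas (measurable_const.indicator hs)
    have hX : Measurable[mΩ] X := hX𝓖.mono h𝓖 le_rfl
    have hindep : IndepFun X ε P := by
      rw [IndepFun_iff_Indep, Indep_iff]
      have h1 := (Indep_iff (_mΩ := mΩ) _ _ P).1 hε_indep
      intro t1 t2 ht1 ht2
      rw [Set.inter_comm, h1 t2 t1 ht2 (measurable_iff_comap_le.mp hX𝓖 t1 ht1), mul_comm]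
    have hmap : P.map (fun ω => (X ω, ε ω)) = (P.map X).prod (P.map ε) :=
      (indepFun_iff_map_prod_eq_prod_map_map hX.aemeasurable hε_meas.aemeasurable).1 hindep
    set Φ : ((Fin d → ℝ) × ℝ) × (Fin d → ℝ) → ℝ≥0∞ := fun p =>
      ENNReal.ofReal p.1.2 *
        (ENNReal.ofReal (rexp (-(∑ i, p.1.1 i ^ 2) / 2 + ∑ i, p.1.1 i * p.2 i))
          * h (p.2 - p.1.1)) with hΦ_def
    have hΦ : Measurable Φ := by
      apply Measurable.mul
      · fun_prop
      · apply Measurable.mul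
        · fun_prop
        · exact hh.comp ((measurable_snd).sub (measurable_fst.comp measurable_fst))
    have step1 : ∫⁻ ω in s, ENNReal.ofReal (ξ ω) * h (ε ω - lam ω) ∂P
        = ∫⁻ ω, Φ (X ω, ε ω) ∂P := by
      rw [← lintegral_indicator hmS]
      congr 1
      funext ω
      by_cases hω : ω ∈ s
      · simp only [Set.indicator_of_mem hω, hΦ_def, hX_def, hξ ω]
        simp [Set.indicator_of_mem hω]
      · simp only [Set.indicator_of_notMem hω, hΦ_def, hX_def]
        simp [Set.indicator_of_notMem hω]
    have step2 : ∫⁻ ω, Φ (X ω, ε ω) ∂P = ∫⁻ a, ∫⁻ b, Φ (a, b) ∂μ₀ ∂(P.map X) := by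
      rw [← lintegral_map hΦ (hX.prodMk hε_meas), hmap, hε_law,
        lintegral_prod _ hΦ.aemeasurable]
    have step3 : ∀ a : (Fin d → ℝ) × ℝ,
        ∫⁻ b, Φ (a, b) ∂μ₀ = ENNReal.ofReal a.2 * ∫⁻ x, h x ∂μ₀ := by
      intro a
      simp only [hΦ_def]
      rw [lintegral_const_mul _ (by
        apply Measurable.mul
        · fun_prop
        · exact hh.comp (measurable_id.sub_const a.1)),
        tilt_lintegral d a.1 h hh]
    have step4 : ∫⁻ a, ENNReal.ofReal a.2 ∂(P.map X) = P s := by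
      rw [lintegral_map (by fun_prop) hX]
      have : (fun ω => ENNReal.ofReal (X ω).2) = s.indicator (fun _ => (1:ℝ≥0∞)) := by
        funext ω
        by_cases hω : ω ∈ s <;>
          simp [hX_def, Set.indicator_of_mem, Set.indicator_of_notMem, hω]
      rw [this, lintegral_indicator hmS]
      simp
    calc ∫⁻ ω in s, ENNReal.ofReal (ξ ω) * h (ε ω - lam ω) ∂P
        = ∫⁻ a, ∫⁻ b, Φ (a, b) ∂μ₀ ∂(P.map X) := by rw [step1, step2]
      _ = ∫⁻ a, ENNReal.ofReal a.2 * ∫⁻ x, h x ∂μ₀ ∂(P.map X) := by simp_rw [step3]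
      _ = (∫⁻ a, ENNReal.ofReal a.2 ∂(P.map X)) * ∫⁻ x, h x ∂μ₀ := by
          rw [lintegral_mul_const _ (by fun_prop)]
      _ = P s * ∫⁻ x, h x ∂μ₀ := by rw [step4]
  -- Q is a probability measure
  have hQuniv : Q Set.univ = 1 := by
    rw [hQ, withDensity_apply _ MeasurableSet.univ, Measure.restrict_univ]
    have h1 := key Set.univ MeasurableSet.univ (fun _ => 1) measurable_const
    simp only [setLIntegral_univ, mul_one, lintegral_one, measure_univ, one_mul] at h1
    exact h1
  have hQprob : IsProbabilityMeasure Q := ⟨hQuniv⟩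
  refine ⟨hQprob, ?_⟩
  intro g hg Cg hgC
  haveI := hQprob
  have hQs : ∀ s : Set Ω, MeasurableSet[𝓖] s → Q s = P s := by
    intro s hs
    rw [hQ, withDensity_apply _ (h𝓖 s hs)]
    have h1 := key s hs (fun _ => 1) measurable_const
    simpa using h1
  -- set-integral computation for nonnegative functions
  have claim : ∀ u : (Fin d → ℝ) → ℝ, Measurable u → (∀ x, 0 ≤ u x) →
      ∀ s : Set Ω, MeasurableSet[𝓖] s →
      ∫ ω in s, u (ε ω - lam ω) ∂Q = (P s).toReal * ∫ x, u x ∂μ₀ := by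
    intro u hu hu0 s hs
    have hmS : MeasurableSet[mΩ] s := h𝓖 s hs
    rw [integral_eq_lintegral_of_nonneg_ae (ae_of_all _ fun ω => hu0 _)
        ((hu.comp hεl).aestronglyMeasurable),
      integral_eq_lintegral_of_nonneg_ae (ae_of_all _ fun x => hu0 x)
        hu.aestronglyMeasurable]
    rw [hQ, restrict_withDensity hmS,
      lintegral_withDensity_eq_lintegral_mul (g := fun ω => ENNReal.ofReal (u (ε ω - lam ω)))
        _ hξm.ennreal_ofReal (hu.comp hεl).ennreal_ofReal]
    have h1 := key s hs (fun x => ENNReal.ofReal (u x)) (by fun_prop)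
    calc (∫⁻ ω in s, ((fun ω => ENNReal.ofReal (ξ ω)) *
            fun ω => ENNReal.ofReal (u (ε ω - lam ω))) ω ∂P).toReal
        = (∫⁻ ω in s, ENNReal.ofReal (ξ ω) * ENNReal.ofReal (u (ε ω - lam ω)) ∂P).toReal := rfl
      _ = (P s * ∫⁻ x, ENNReal.ofReal (u x) ∂μ₀).toReal := by rw [h1]
      _ = (P s).toReal * (∫⁻ x, ENNReal.ofReal (u x) ∂μ₀).toReal := ENNReal.toReal_mul
  -- decomposition of g
  set c : ℝ := ∫ x, g x ∂μ₀ with hc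
  have hCg0 : 0 ≤ Cg := le_trans (abs_nonneg _) (hgC 0)
  have hudecomp : ∀ x : Fin d → ℝ, g x = max (g x) 0 - max (-g x) 0 := by
    intro x; rcases le_total 0 (g x) with h | h
    · rw [max_eq_left h, max_eq_right (by linarith), sub_zero]
    · rw [max_eq_right h, max_eq_left (by linarith)]; ring
  have hgp : Measurable fun x : Fin d → ℝ => max (g x) 0 := hg.max measurable_const
  have hgm : Measurable fun x : Fin d → ℝ => max (-g x) 0 := hg.neg.max measurable_const
  have hbd : ∀ (u : (Fin d → ℝ) → ℝ), (∀ x, |u x| ≤ Cg) → Measurable u →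
      ∀ (ν : @Measure Ω mΩ) (_ : IsFiniteMeasure ν), Integrable (fun ω => u (ε ω - lam ω)) ν := by
    intro u hub hum ν hν
    exact ⟨(hum.comp hεl).aestronglyMeasurable,
      HasFiniteIntegral.of_bounded (C := Cg) (ae_of_all _ fun ω => by
        simpa [Real.norm_eq_abs] using hub _)⟩
  have hbdμ₀ : ∀ (u : (Fin d → ℝ) → ℝ), (∀ x, |u x| ≤ Cg) → Measurable u →
      Integrable u μ₀ := by
    intro u hub hum
    exact ⟨hum.aestronglyMeasurable,
      HasFiniteIntegral.of_bounded (C := Cg) (ae_of_all _ fun x => by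
        simpa [Real.norm_eq_abs] using hub _)⟩
  have hgp_bd : ∀ x, |max (g x) 0| ≤ Cg := fun x => by
    rw [abs_of_nonneg (le_max_right _ _)]
    exact max_le (le_trans (le_abs_self _) (hgC x)) hCg0
  have hgm_bd : ∀ x, |max (-g x) 0| ≤ Cg := fun x => by
    rw [abs_of_nonneg (le_max_right _ _)]
    exact max_le (le_trans (le_abs_self _) ((abs_neg (g x)) ▸ hgC x)) hCg0
  have hfQ : Integrable (fun ω => g (ε ω - lam ω)) Q := hbd g hgC hg Q inferInstance
  -- the set-integral equality
  have hg_eq : ∀ s : Set Ω, MeasurableSet[𝓖] s → Q s < ⊤ →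
      ∫ _ω in s, c ∂Q = ∫ ω in s, g (ε ω - lam ω) ∂Q := by
    intro s hs _
    have hmS : MeasurableSet[mΩ] s := h𝓖 s hs
    have hr : ∫ ω in s, g (ε ω - lam ω) ∂Q
        = ∫ ω in s, (max (g (ε ω - lam ω)) 0 - max (-g (ε ω - lam ω)) 0) ∂Q := by
      congr 1; funext ω; exact hudecomp _
    rw [hr, integral_sub
        ((hbd _ hgp_bd hgp Q inferInstance).restrict)
        ((hbd _ hgm_bd hgm Q inferInstance).restrict),
      claim _ hgp (fun x => le_max_right _ _) s hs,
      claim _ hgm (fun x => le_max_right _ _) s hs,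
      ← mul_sub, ← integral_sub (hbdμ₀ _ hgp_bd hgp) (hbdμ₀ _ hgm_bd hgm)]
    have : ∫ x, (max (g x) 0 - max (-g x) 0) ∂μ₀ = c := by
      rw [hc]; congr 1; funext x; exact (hudecomp x).symm
    rw [this, setIntegral_const, measureReal_def, hQs s hs, smul_eq_mul]
  haveI : SigmaFinite (Q.trim h𝓖) := by
    haveI := isFiniteMeasure_trim h𝓖 (μ := Q)
    infer_instance
  have main := ae_eq_condExp_of_forall_setIntegral_eq (μ := Q) h𝓖 hfQ
    (fun s _ hslt => (integrableOn_const hslt.ne))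
    hg_eq
    (StronglyMeasurable.aestronglyMeasurable stronglyMeasurable_const)
  exact main.symm
end
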